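/- Let H be a separable complex Hilbert space and A a bounded normal operator on H with ‖A‖ ≤ 1 and ‖A f‖ < ‖f‖ for every nonzero f ∈ H. Then there exists a countable set G ⊆ H such that the family (A^n g), indexed by (g,n) ∈ G × ℕ, is a Parseval frame for H, i.e. Σ_{g∈G} Σ_{n≥0} |⟨f, A^n g⟩|² = ‖f‖² for all f ∈ H. -/

import Mathlib

open ContinuousLinearMap Filter
open scoped InnerProductSpace ENNReal

set_option maxHeartbeats 1000000 in
set_option synthInstance.maxHeartbeats 400000 in
/-- For a normal contraction that is strictly contractive on nonzero vectors,
powers tend to zero strongly (squared-norm version). -/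
lemma aux_tendsto_pow_zero {H : Type*} [NormedAddCommGroup H] [InnerProductSpace ℂ H]
    [CompleteSpace H] (B : H →L[ℂ] H) (hB : star B * B = B * star B)
    (hn : ‖B‖ ≤ 1) (hc : ∀ f : H, f ≠ 0 → ‖B f‖ < ‖f‖) (f : H) :
    Tendsto (fun n => ‖(B ^ n) f‖ ^ 2) atTop (nhds 0) := by
  set T : H →L[ℂ] H := star B * B with hT
  have hcomm : Commute (star B) B := hT.symm.trans hB
  have hTsa : star T = T := by rw [hT, star_mul, star_star]
  have hTpow : ∀ k : ℕ, T ^ k = star (B ^ k) * (B ^ k) := by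
    intro k
    rw [hT, star_pow, Commute.mul_pow hcomm]
  set a : ℕ → ℝ := fun n => ‖(B ^ n) f‖ ^ 2 with ha
  have key : ∀ n m : ℕ, ⟪(T ^ n) f, (T ^ m) f⟫_ℂ = ((a (n + m) : ℝ) : ℂ) := by
    intro n m
    have hsa : ContinuousLinearMap.adjoint (T ^ n) = T ^ n := by
      rw [← star_eq_adjoint, star_pow, hTsa]
    calc ⟪(T ^ n) f, (T ^ m) f⟫_ℂ
        = ⟪ContinuousLinearMap.adjoint (T ^ n) f, (T ^ m) f⟫_ℂ := by rw [hsa]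
      _ = ⟪f, (T ^ n) ((T ^ m) f)⟫_ℂ := adjoint_inner_left _ _ _
      _ = ⟪f, (T ^ (n + m)) f⟫_ℂ := by rw [pow_add]; rfl
      _ = ((a (n + m) : ℝ) : ℂ) := by
          rw [hTpow, mul_apply_eq_comp, star_eq_adjoint, adjoint_inner_right,
            inner_self_eq_norm_sq_to_K]
          norm_cast
  have hre : ∀ n m : ℕ, RCLike.re ⟪(T ^ n) f, (T ^ m) f⟫_ℂ = a (n + m) := by
    intro n m; rw [key]; simp
  have hstep : ∀ (g : H), ‖B g‖ ≤ ‖g‖ := fun g => by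
    calc ‖B g‖ ≤ ‖B‖ * ‖g‖ := le_opNorm _ _
      _ ≤ 1 * ‖g‖ := mul_le_mul_of_nonneg_right hn (norm_nonneg _)
      _ = ‖g‖ := one_mul _
  have hanti : Antitone a := by
    apply antitone_nat_of_succ_le
    intro n
    have h1 : ‖(B ^ (n + 1)) f‖ ≤ ‖(B ^ n) f‖ := by
      rw [pow_succ', mul_apply_eq_comp]; exact hstep _
    exact pow_le_pow_left₀ (norm_nonneg _) h1 2
  have hbdd : BddBelow (Set.range a) := by
    refine ⟨0, ?_⟩
    rintro x ⟨n, rfl⟩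
    exact sq_nonneg _
  set L : ℝ := ⨅ n, a n with hL
  have haL : Tendsto a atTop (nhds L) := tendsto_atTop_ciInf hanti hbdd
  have hLle : ∀ n, L ≤ a n := fun n => ciInf_le hbdd n
  have hdist : ∀ n m : ℕ, dist ((T ^ n) f) ((T ^ m) f) ^ 2
      = a (n + n) - 2 * a (n + m) + a (m + m) := by
    intro n m
    have e1 : ‖(T ^ n) f‖ ^ 2 = a (n + n) := by rw [← hre n n, inner_self_eq_norm_sq]
    have e3 : ‖(T ^ m) f‖ ^ 2 = a (m + m) := by rw [← hre m m, inner_self_eq_norm_sq]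
    rw [dist_eq_norm, @norm_sub_sq ℂ, e1, e3, hre n m]
  have hmul2 : Tendsto (fun n : ℕ => n + n) atTop atTop :=
    tendsto_atTop_atTop_of_monotone (fun x y h => by omega) (fun b => ⟨b, by omega⟩)
  have ha2L : Tendsto (fun n => a (n + n)) atTop (nhds L) := haL.comp hmul2
  have hcauchy : CauchySeq (fun n => (T ^ n) f) := by
    rw [Metric.cauchySeq_iff]
    intro ε hε
    have h2' : Tendsto (fun n => a (n + n) - L) atTop (nhds 0) := by
      simpa using ha2L.sub_const L
    have hev : ∀ᶠ N in atTop, a (N + N) - L < ε ^ 2 / 2 :=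
      (tendsto_order.1 h2').2 (ε ^ 2 / 2) (by positivity)
    obtain ⟨N, hN⟩ := hev.exists
    refine ⟨N, fun n hn' m hm' => ?_⟩
    have hd := hdist n m
    have hub : dist ((T ^ n) f) ((T ^ m) f) ^ 2 < ε ^ 2 := by
      rw [hd]
      have e1 : a (n + n) ≤ a (N + N) := hanti (by omega)
      have e2 : a (m + m) ≤ a (N + N) := hanti (by omega)
      have e3 : L ≤ a (n + m) := hLle _
      nlinarith
    nlinarith [dist_nonneg (x := (T ^ n) f) (y := (T ^ m) f), hε]
  obtain ⟨g, hg⟩ := cauchySeq_tendsto_of_complete hcauchy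
  have hTg : T g = g := by
    have h1 : Tendsto (fun n => T ((T ^ n) f)) atTop (nhds (T g)) :=
      (T.continuous.tendsto g).comp hg
    have h2 : Tendsto (fun n => T ((T ^ n) f)) atTop (nhds g) := by
      have heq : (fun n => T ((T ^ n) f)) = fun n => (T ^ (n + 1)) f := by
        funext n; rw [pow_succ']; rfl
      rw [heq]
      exact hg.comp (tendsto_add_atTop_nat 1)
    exact tendsto_nhds_unique h1 h2
  have hg0 : g = 0 := by
    by_contra hne
    have hinner : ⟪B g, B g⟫_ℂ = ⟪g, g⟫_ℂ := by
      calc ⟪B g, B g⟫_ℂ = ⟪g, (star B) (B g)⟫_ℂ := by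
            rw [star_eq_adjoint, adjoint_inner_right]
        _ = ⟪g, T g⟫_ℂ := by rw [hT, mul_apply_eq_comp]
        _ = ⟪g, g⟫_ℂ := by rw [hTg]
    have hnn : ‖B g‖ ^ 2 = ‖g‖ ^ 2 := by
      rw [inner_self_eq_norm_sq_to_K, inner_self_eq_norm_sq_to_K] at hinner
      exact_mod_cast hinner
    have := hc g hne
    nlinarith [norm_nonneg (B g), norm_nonneg g]
  have ha20 : Tendsto (fun n => a (n + n)) atTop (nhds 0) := by
    have h1 : ∀ n, a (n + n) = ‖(T ^ n) f‖ ^ 2 := by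
      intro n
      rw [← hre n n, inner_self_eq_norm_sq]
    have h2 : Tendsto (fun n => ‖(T ^ n) f‖ ^ 2) atTop (nhds (‖g‖ ^ 2)) :=
      ((continuous_norm.tendsto g).comp hg).pow 2
    rw [hg0, norm_zero] at h2
    simpa [h1] using h2
  have hL0 : L = 0 := tendsto_nhds_unique ha2L ha20
  rw [← hL0]
  exact haL

lemma aux_parseval {H : Type*} [NormedAddCommGroup H] [InnerProductSpace ℂ H]
    {ι : Type*} (b : HilbertBasis ι ℂ H) (h : H) :
    HasSum (fun i => ‖⟪h, b i⟫_ℂ‖ ^ 2) (‖h‖ ^ 2) := by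
  have h0 := b.hasSum_inner_mul_inner h h
  have heq : (fun i => ⟪h, b i⟫_ℂ * ⟪b i, h⟫_ℂ)
      = fun i => ((‖⟪h, b i⟫_ℂ‖ ^ 2 : ℝ) : ℂ) := by
    funext i
    rw [← inner_conj_symm (b i) h, RCLike.mul_conj]
    norm_cast
  rw [heq] at h0
  have h1 := h0.mapL Complex.reCLM
  simp only [Complex.reCLM_apply, Complex.ofReal_re] at h1
  have h2 : (⟪h, h⟫_ℂ).re = ‖h‖ ^ 2 := by
    simpa using inner_self_eq_norm_sq (𝕜 := ℂ) h
  rw [h2] at h1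
  exact h1

lemma aux_enorm_sq {E : Type*} [NormedAddCommGroup E] (x : E) :
    (‖x‖₊ : ℝ≥0∞) ^ 2 = ENNReal.ofReal (‖x‖ ^ 2) := by
  rw [← enorm_eq_nnnorm, ← ofReal_norm, ← ENNReal.ofReal_pow (norm_nonneg _)]

lemma aux_tsum_enn {ι : Type*} {c : ι → ℝ} {s : ℝ} (hc : ∀ i, 0 ≤ c i) (h : HasSum c s) :
    ∑' i, ENNReal.ofReal (c i) = ENNReal.ofReal s := by
  rw [← ENNReal.ofReal_tsum_of_nonneg hc h.summable, h.tsum_eq]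

lemma aux_countable {H : Type*} [NormedAddCommGroup H] [InnerProductSpace ℂ H]
    [TopologicalSpace.SeparableSpace H] {w : Set H}
    (hw : Orthonormal ℂ (Subtype.val : w → H)) : w.Countable := by
  obtain ⟨s, hsc, hsd⟩ := TopologicalSpace.exists_countable_dense H
  have hdist : ∀ x y : w, x ≠ y → dist (x : H) (y : H) ^ 2 = 2 := by
    intro x y hxy
    have h0 : ⟪(x : H), (y : H)⟫_ℂ = 0 := hw.2 hxy
    rw [dist_eq_norm, @norm_sub_sq ℂ, h0]
    have e1 : ‖(x : H)‖ = 1 := hw.1 x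
    have e2 : ‖(y : H)‖ = 1 := hw.1 y
    rw [e1, e2]
    simp
    norm_num
  have hch : ∀ x : w, ∃ d : H, d ∈ s ∧ dist (x : H) d < 0.7 := by
    intro x
    obtain ⟨d, hd⟩ := (Metric.dense_iff.mp hsd) (x : H) 0.7 (by norm_num)
    exact ⟨d, hd.2, by have := hd.1; rw [Metric.mem_ball] at this; linarith [dist_comm (x : H) d ▸ this]⟩
  choose φ hφs hφd using hch
  have hinj : Function.Injective φ := by
    intro x y hxy
    by_contra hne
    have h1 := hφd x
    have h2 := hφd y
    have h3 : dist (x : H) (y : H) ≤ dist (x : H) (φ x) + dist (φ y) (y : H) := by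
      rw [hxy]
      exact dist_triangle _ _ _
    have h4 := hdist x y hne
    have h2' : dist (φ y) (y : H) < 0.7 := by rw [dist_comm]; exact h2
    nlinarith [dist_nonneg (x := (x : H)) (y := (y : H)),
      dist_nonneg (x := (x : H)) (y := φ x), dist_nonneg (x := φ y) (y := (y : H))]
  have hs : Countable ↥s := hsc.to_subtype
  have hw' : Countable ↥w :=
    Function.Injective.countable (f := fun x : w => (⟨φ x, hφs x⟩ : s))
      (fun a b hab => hinj (congrArg Subtype.val hab))
  exact Set.countable_coe_iff.mp hw'

set_option maxHeartbeats 2000000 in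
set_option synthInstance.maxHeartbeats 1000000 in
/-- If `A` is a bounded normal operator on a separable complex Hilbert space `H` with
`‖A‖ ≤ 1` and `‖A f‖ < ‖f‖` for all nonzero `f`, then there exists a countable set `G ⊆ H`
such that `{A^n g : g ∈ G, n ∈ ℕ}` is a Parseval frame for `H`. -/
theorem stmt_7 {H : Type*} [NormedAddCommGroup H] [InnerProductSpace ℂ H] [CompleteSpace H]
    [TopologicalSpace.SeparableSpace H]
    (A : H →L[ℂ] H) (hA : adjoint A ∘L A = A ∘L adjoint A)
    (hnorm : ‖A‖ ≤ 1) (hcontr : ∀ f : H, f ≠ 0 → ‖A f‖ < ‖f‖) :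
    ∃ G : Set H, G.Countable ∧ ∀ f : H,
      (∑' p : ↥G × ℕ, (‖⟪f, (A ^ p.2) (p.1 : H)⟫_ℂ‖₊ : ℝ≥0∞) ^ 2) = (‖f‖₊ : ℝ≥0∞) ^ 2 := by
  classical
  -- basic facts about the adjoint
  have hBnorm : ‖adjoint A‖ ≤ 1 := by
    rw [← star_eq_adjoint]
    calc ‖star A‖ = ‖A‖ := norm_star A
      _ ≤ 1 := hnorm
  have hABnorm : ∀ g : H, ‖adjoint A g‖ = ‖A g‖ := by
    intro g
    have hinner : ⟪adjoint A g, adjoint A g⟫_ℂ = ⟪A g, A g⟫_ℂ := by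
      calc ⟪adjoint A g, adjoint A g⟫_ℂ
          = ⟪g, A (adjoint A g)⟫_ℂ := adjoint_inner_left _ _ _
        _ = ⟪g, (A ∘L adjoint A) g⟫_ℂ := rfl
        _ = ⟪g, (adjoint A ∘L A) g⟫_ℂ := by rw [hA]
        _ = ⟪g, adjoint A (A g)⟫_ℂ := rfl
        _ = ⟪A g, A g⟫_ℂ := adjoint_inner_right _ _ _
    rw [inner_self_eq_norm_sq_to_K, inner_self_eq_norm_sq_to_K] at hinner
    have h2 : ‖adjoint A g‖ ^ 2 = ‖A g‖ ^ 2 := by exact_mod_cast hinner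
    exact (pow_left_inj₀ (norm_nonneg _) (norm_nonneg _) two_ne_zero).mp h2
  have hBcomm : star (adjoint A) * adjoint A = adjoint A * star (adjoint A) := by
    rw [star_eq_adjoint, adjoint_adjoint]
    exact hA.symm
  have hBcontr : ∀ f : H, f ≠ 0 → ‖adjoint A f‖ < ‖f‖ := by
    intro f hf
    rw [hABnorm]
    exact hcontr f hf
  have htend : ∀ f : H, Filter.Tendsto (fun n => ‖((adjoint A) ^ n) f‖ ^ 2)
      Filter.atTop (nhds 0) :=
    aux_tendsto_pow_zero (adjoint A) hBcomm hBnorm hBcontr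
  -- the positive operator D = 1 - A A*
  have hDsa : IsSelfAdjoint (1 - A * adjoint A) := by
    rw [IsSelfAdjoint, star_sub, star_one, star_mul, star_eq_adjoint, star_eq_adjoint,
      adjoint_adjoint]
  have hDpos : (0 : H →L[ℂ] H) ≤ 1 - A * adjoint A := by
    rw [nonneg_iff_isPositive]
    refine ⟨hDsa.isSymmetric, fun x => ?_⟩
    have hx : (1 - A * adjoint A) x = x - A (adjoint A x) := rfl
    have h1 : ⟪(1 - A * adjoint A) x, x⟫_ℂ = ⟪x, x⟫_ℂ - ⟪adjoint A x, adjoint A x⟫_ℂ := by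
      rw [hx, inner_sub_left]
      congr 1
      exact (adjoint_inner_right A _ _).symm
    rw [reApplyInnerSelf_apply, h1, map_sub, inner_self_eq_norm_sq, inner_self_eq_norm_sq]
    have h2 : ‖adjoint A x‖ ≤ ‖x‖ := by
      calc ‖adjoint A x‖ ≤ ‖adjoint A‖ * ‖x‖ := le_opNorm _ _
        _ ≤ 1 * ‖x‖ := mul_le_mul_of_nonneg_right hBnorm (norm_nonneg _)
        _ = ‖x‖ := one_mul _
    nlinarith [norm_nonneg (adjoint A x), norm_nonneg x]
  -- the square root
  set R : H →L[ℂ] H := CFC.sqrt (1 - A * adjoint A) with hRdef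
  have hR2 : R ^ 2 = 1 - A * adjoint A := CFC.sq_sqrt _ hDpos
  have hRsa : ContinuousLinearMap.adjoint R = R :=
    isSelfAdjoint_iff'.mp (IsSelfAdjoint.of_nonneg (CFC.sqrt_nonneg (a := 1 - A * adjoint A)))
  have hRnorm : ∀ h : H, ‖R h‖ ^ 2 = ‖h‖ ^ 2 - ‖adjoint A h‖ ^ 2 := by
    intro h
    have h1 : ⟪R h, R h⟫_ℂ = ⟪h, (R ^ 2) h⟫_ℂ := by
      calc ⟪R h, R h⟫_ℂ = ⟪ContinuousLinearMap.adjoint R h, R h⟫_ℂ := by rw [hRsa]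
        _ = ⟪h, R (R h)⟫_ℂ := adjoint_inner_left _ _ _
        _ = ⟪h, (R ^ 2) h⟫_ℂ := by rw [pow_two]; rfl
    rw [hR2] at h1
    have h2 : (1 - A * adjoint A) h = h - A (adjoint A h) := rfl
    rw [h2, inner_sub_right] at h1
    have h3 : ⟪h, A (adjoint A h)⟫_ℂ = ⟪adjoint A h, adjoint A h⟫_ℂ :=
      (adjoint_inner_left A _ _).symm
    rw [h3, inner_self_eq_norm_sq_to_K, inner_self_eq_norm_sq_to_K,
      inner_self_eq_norm_sq_to_K] at h1
    exact_mod_cast h1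
  have hRinj : Function.Injective R := by
    intro x y hxy
    by_contra hne
    have hz : R (x - y) = 0 := by rw [map_sub, hxy, sub_self]
    have h1 := hRnorm (x - y)
    rw [hz, norm_zero] at h1
    have h2 : ‖adjoint A (x - y)‖ = ‖A (x - y)‖ := hABnorm _
    have h3 := hcontr (x - y) (sub_ne_zero.mpr hne)
    rw [h2] at h1
    nlinarith [norm_nonneg (A (x - y)), norm_nonneg (x - y)]
  -- Hilbert basis
  obtain ⟨w, b, hb⟩ := exists_hilbertBasis ℂ H
  have hworth : Orthonormal ℂ (Subtype.val : w → H) := hb ▸ b.orthonormal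
  have hwcount : w.Countable := aux_countable hworth
  have : Countable ↥w := hwcount.to_subtype
  have hinj : Function.Injective (fun i : w => R (b i)) := by
    intro i j hij
    have h1 : b i = b j := hRinj hij
    rw [hb] at h1
    exact Subtype.coe_injective h1
  refine ⟨Set.range (fun i : w => R (b i)), Set.countable_range _, fun f => ?_⟩
  -- reindex by w × ℕ
  set e : w × ℕ ≃ ↥(Set.range (fun i : w => R (b i))) × ℕ :=
    (Equiv.ofInjective _ hinj).prodCongr (Equiv.refl ℕ) with hedef
  rw [← Equiv.tsum_eq e (fun p => (‖⟪f, (A ^ p.2) (p.1 : H)⟫_ℂ‖₊ : ℝ≥0∞) ^ 2)]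
  have hterm : ∀ q : w × ℕ,
      (‖⟪f, (A ^ (e q).2) (((e q).1 : H))⟫_ℂ‖₊ : ℝ≥0∞) ^ 2
        = (‖⟪R (((adjoint A) ^ q.2) f), b q.1⟫_ℂ‖₊ : ℝ≥0∞) ^ 2 := by
    intro q
    have h0 : ((e q).1 : H) = R (b q.1) := rfl
    have h0' : (e q).2 = q.2 := rfl
    rw [h0, h0']
    have hinner :
      ⟪f, (A ^ q.2) (R (b q.1))⟫_ℂ = ⟪R (((adjoint A) ^ q.2) f), b q.1⟫_ℂ := by
      calc ⟪f, (A ^ q.2) (R (b q.1))⟫_ℂ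
          = ⟪ContinuousLinearMap.adjoint (A ^ q.2) f, R (b q.1)⟫_ℂ :=
          (adjoint_inner_left _ _ _).symm
      _ = ⟪ContinuousLinearMap.adjoint R (ContinuousLinearMap.adjoint (A ^ q.2) f), b q.1⟫_ℂ :=
          (adjoint_inner_left _ _ _).symm
      _ = ⟪R (((adjoint A) ^ q.2) f), b q.1⟫_ℂ := by
          rw [hRsa, ← star_eq_adjoint, star_pow, star_eq_adjoint]
    rw [hinner]
  calc (∑' q : w × ℕ, (‖⟪f, (A ^ (e q).2) (((e q).1 : H))⟫_ℂ‖₊ : ℝ≥0∞) ^ 2)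
      = ∑' q : w × ℕ, (‖⟪R (((adjoint A) ^ q.2) f), b q.1⟫_ℂ‖₊ : ℝ≥0∞) ^ 2 := by
        exact tsum_congr hterm
    _ = ∑' (i : w) (n : ℕ), (‖⟪R (((adjoint A) ^ n) f), b i⟫_ℂ‖₊ : ℝ≥0∞) ^ 2 :=
        ENNReal.tsum_prod'
    _ = ∑' (n : ℕ) (i : w), (‖⟪R (((adjoint A) ^ n) f), b i⟫_ℂ‖₊ : ℝ≥0∞) ^ 2 :=
        ENNReal.tsum_comm
    _ = ∑' (n : ℕ), ENNReal.ofReal (‖R (((adjoint A) ^ n) f)‖ ^ 2) := by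
        refine tsum_congr fun n => ?_
        have hps := aux_parseval b (R (((adjoint A) ^ n) f))
        calc (∑' (i : w), (‖⟪R (((adjoint A) ^ n) f), b i⟫_ℂ‖₊ : ℝ≥0∞) ^ 2)
            = ∑' (i : w), ENNReal.ofReal (‖⟪R (((adjoint A) ^ n) f), b i⟫_ℂ‖ ^ 2) :=
              tsum_congr fun i => aux_enorm_sq _
          _ = ENNReal.ofReal (‖R (((adjoint A) ^ n) f)‖ ^ 2) :=
              aux_tsum_enn (fun i => sq_nonneg _) hps
    _ = ENNReal.ofReal (‖f‖ ^ 2) := by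
        refine aux_tsum_enn (fun n => sq_nonneg _) ?_
        set β : ℕ → ℝ := fun n => ‖((adjoint A) ^ n) f‖ ^ 2 with hβ
        have hceq : ∀ k : ℕ, ‖R (((adjoint A) ^ k) f)‖ ^ 2 = β k - β (k + 1) := by
          intro k
          rw [hRnorm]
          congr 1
          rw [hβ]
          simp only []
          congr 1
          rw [pow_succ']
          rfl
        rw [hasSum_iff_tendsto_nat_of_nonneg (fun n => sq_nonneg _)]
        have hsum : ∀ n : ℕ, ∑ k ∈ Finset.range n, ‖R (((adjoint A) ^ k) f)‖ ^ 2
            = β 0 - β n := by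
          intro n
          calc ∑ k ∈ Finset.range n, ‖R (((adjoint A) ^ k) f)‖ ^ 2
              = ∑ k ∈ Finset.range n, (β k - β (k + 1)) :=
                Finset.sum_congr rfl fun k _ => hceq k
            _ = β 0 - β n := Finset.sum_range_sub' β n
        simp only [hsum]
        have hβ0 : β 0 = ‖f‖ ^ 2 := by
          rw [hβ]; simp
        have := (htend f).const_sub (β 0)
        rw [sub_zero] at this
        rw [hβ0] at this
        exact this
    _ = (‖f‖₊ : ℝ≥0∞) ^ 2 := (aux_enorm_sq f).symm
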